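/- For a partition λ with r nonzero parts and parameters a = (a_0, a_1, a_2, ...) with a_0 = 0, the double monomial symmetric function m_λ(ξ|a), defined as the symmetrization over distinct permutations of the product ∏_{i=1}^r (ξ_i + a_0)⋯(ξ_i + a_{λ_i - 1}), satisfies the expansion m_λ(ξ|a) = Σ_{(1^r) ⊆ α ⊆ λ} (n_λ / n_α) e_{λ/α}(a) m_α(ξ), where for a sequence α = (α_1,...,α_r) with 1 ≤ α_i ≤ λ_i, n_α = r!/(∏_i m_i(α)!) with m_i(α) the multiplicity of i in α, e_{λ/α}(a) = ∏_i e_{λ_i − α_i}(a_1,...,a_{λ_i − 1}), and m_α(ξ) is the monomial symmetric function of the sorted sequence α. In particular, every coefficient (n_λ/n_α)·e_{λ/α}(a) appearing in the sum, after collecting terms over permutations of α, is a polynomial with integer coefficients. -/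

import Mathlib

open MvPolynomial

/-- `ℚ[a_1, a_2, …]`: the variable `X t` is `a_{t+1}`. -/
abbrev ARing : Type := MvPolynomial ℕ ℚ

/-- The parameters `a_t`, with `a_0 = 0`. -/
noncomputable def aval (t : ℕ) : ARing :=
  if t = 0 then 0 else MvPolynomial.X (t - 1)

/-- The monomial symmetric polynomial `m_α(ξ)` in `ξ_1, …, ξ_r`: the sum of `ξ^β` over
the distinct rearrangements `β` of `α`. -/
noncomputable def msym {r : ℕ} (α : Fin r → ℕ) : MvPolynomial (Fin r) ARing :=
  ∑ β ∈ Finset.image (fun σ : Equiv.Perm (Fin r) => α ∘ σ) Finset.univ,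
    ∏ i, MvPolynomial.X i ^ β i

/-- The double monomial symmetric polynomial `m_λ(ξ|a)`: the symmetrization (sum over
distinct terms) of `∏_i (ξ_i + a_0)⋯(ξ_i + a_{λ_i - 1})`. -/
noncomputable def dmsym {r : ℕ} (l : Fin r → ℕ) : MvPolynomial (Fin r) ARing :=
  (Finset.image
    (fun σ : Equiv.Perm (Fin r) =>
      ∏ i, ∏ t ∈ Finset.range (l i), (MvPolynomial.X (σ i) + MvPolynomial.C (aval t)))
    Finset.univ).sum id

/-- `n_α = r! / ∏_i m_i(α)!`, where `m_i(α)` is the multiplicity of `i` in `α`. -/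
noncomputable def nfac {r : ℕ} (α : Fin r → ℕ) : ℚ :=
  (r.factorial : ℚ) /
    ∏ v ∈ Finset.image α Finset.univ,
      ((Finset.univ.filter fun i => α i = v).card.factorial : ℚ)

/-- The elementary symmetric polynomial `e_k(a_1, …, a_n)`. -/
noncomputable def esymA (k n : ℕ) : ARing :=
  ∑ s ∈ Finset.powersetCard k (Finset.range n), ∏ t ∈ s, MvPolynomial.X t

/-! ### Auxiliary machinery -/

/-- Product of the factorials of the multiplicities of `f`. -/
noncomputable def Mfac {r : ℕ} (f : Fin r → ℕ) : ℕ :=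
  ∏ v ∈ Finset.image f Finset.univ,
    ((Finset.univ.filter fun i => f i = v).card).factorial

lemma Mfac_pos {r : ℕ} (f : Fin r → ℕ) : 0 < Mfac f :=
  Finset.prod_pos fun _ _ => Nat.factorial_pos _

lemma nfac_eq {r : ℕ} (f : Fin r → ℕ) : nfac f = (r.factorial : ℚ) / (Mfac f : ℕ) := by
  unfold nfac Mfac
  push_cast
  rfl

lemma card_stab {r : ℕ} (f : Fin r → ℕ) :
    (Finset.univ.filter fun σ : Equiv.Perm (Fin r) => f ∘ σ = f).card = Mfac f := by
  rw [← Fintype.card_subtype, DomMulAct.stabilizer_card' f]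
  exact Finset.prod_congr rfl fun v _ => by rw [Fintype.card_subtype]

lemma card_fiber {r : ℕ} (f g : Fin r → ℕ) (τ₀ : Equiv.Perm (Fin r)) (hτ : f ∘ τ₀ = g) :
    (Finset.univ.filter fun σ : Equiv.Perm (Fin r) => f ∘ σ = g).card = Mfac f := by
  rw [← card_stab f]
  apply Finset.card_bij' (fun σ _ => σ * τ₀⁻¹) (fun τ _ => τ * τ₀)
  · intro σ hσ
    simp only [Finset.mem_filter, Finset.mem_univ, true_and] at hσ ⊢
    funext x
    simp only [Function.comp_apply, Equiv.Perm.mul_apply]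
    have := congrFun hσ (τ₀⁻¹ x)
    simp only [Function.comp_apply] at this
    rw [this, ← hτ]
    simp
  · intro τ hτ'
    simp only [Finset.mem_filter, Finset.mem_univ, true_and] at hτ' ⊢
    funext x
    simp only [Function.comp_apply, Equiv.Perm.mul_apply]
    have := congrFun hτ' (τ₀ x)
    simp only [Function.comp_apply] at this
    rw [this, ← hτ]
    simp
  · intro σ _; group
  · intro τ _; group

/-- Summing a function of `f ∘ σ` over all permutations groups into `Mfac f` copies of
each distinct rearrangement. -/
lemma sum_perm_comp {r : ℕ} {M : Type*} [AddCommMonoid M] (f : Fin r → ℕ)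
    (F : (Fin r → ℕ) → M) :
    ∑ σ : Equiv.Perm (Fin r), F (f ∘ σ) =
      ∑ c ∈ Finset.image (fun σ : Equiv.Perm (Fin r) => f ∘ σ) Finset.univ,
        Mfac f • F c := by
  classical
  rw [Finset.sum_comp F (fun σ : Equiv.Perm (Fin r) => f ∘ σ)]
  apply Finset.sum_congr rfl
  intro c hc
  obtain ⟨τ₀, _, hτ₀⟩ := Finset.mem_image.mp hc
  rw [card_fiber f c τ₀ hτ₀]

lemma filter_card_count {r : ℕ} (f : Fin r → ℕ) (v : ℕ) :
    (Finset.univ.filter fun i => f i = v).card =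
      Multiset.count v (Finset.univ.val.map f) := by
  rw [Multiset.count_map, Finset.card, Finset.filter_val]
  congr 1
  apply Multiset.filter_congr
  intro i _
  simp [eq_comm]

lemma Mfac_congr {r : ℕ} {α μ : Fin r → ℕ}
    (h : Finset.univ.val.map α = Finset.univ.val.map μ) : Mfac α = Mfac μ := by
  unfold Mfac
  have himg : Finset.image α Finset.univ = Finset.image μ Finset.univ := by
    apply Finset.val_injective
    rw [Finset.image_val, Finset.image_val, h]
  rw [himg]
  apply Finset.prod_congr rfl
  intro v _
  rw [filter_card_count, filter_card_count, h]

lemma exists_perm_iff {r : ℕ} (μ β : Fin r → ℕ) :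
    (∃ σ : Equiv.Perm (Fin r), μ ∘ σ = β) ↔
      Finset.univ.val.map β = Finset.univ.val.map μ := by
  constructor
  · rintro ⟨σ, rfl⟩
    have hval : Finset.univ.val.map (σ : Fin r → Fin r) = Finset.univ.val := by
      have h2 := Finset.map_univ_equiv σ
      calc Finset.univ.val.map (σ : Fin r → Fin r)
          = (Finset.univ.map σ.toEmbedding).val := by rw [Finset.map_val]; rfl
        _ = Finset.univ.val := by rw [h2]
    calc Finset.univ.val.map (μ ∘ σ) = (Finset.univ.val.map (σ : Fin r → Fin r)).map μ := by
          rw [Multiset.map_map]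
      _ = Finset.univ.val.map μ := by rw [hval]
  · intro h
    have hcard : ∀ v, Fintype.card {i // β i = v} = Fintype.card {i // μ i = v} := by
      intro v
      rw [Fintype.card_subtype, Fintype.card_subtype, filter_card_count,
        filter_card_count, h]
    refine ⟨((Equiv.sigmaFiberEquiv β).symm.trans
      (Equiv.sigmaCongrRight fun v => Fintype.equivOfCardEq (hcard v))).trans
      (Equiv.sigmaFiberEquiv μ), ?_⟩
    funext i
    simp only [Function.comp_apply, Equiv.trans_apply]
    have h1 : (Equiv.sigmaFiberEquiv β).symm i = ⟨β i, ⟨i, rfl⟩⟩ := rfl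
    rw [h1]
    exact (Fintype.equivOfCardEq (hcard (β i)) ⟨i, rfl⟩).2

/-! ### Vieta-style expansion -/

lemma esymA_self_zero (n : ℕ) : esymA 0 n = 1 := by simp [esymA]

lemma vieta_core {r : ℕ} (j : Fin r) (n : ℕ) :
    ∏ t ∈ Finset.range n, (MvPolynomial.X j + MvPolynomial.C (MvPolynomial.X t : ARing)) =
      ∑ k ∈ Finset.range (n + 1),
        MvPolynomial.C (esymA k n) * MvPolynomial.X j ^ (n - k) := by
  have key := Multiset.prod_X_add_C_eq_sum_esymm
    ((Finset.range n).val.map (MvPolynomial.X : ℕ → ARing))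
  have hcard : Multiset.card ((Finset.range n).val.map (MvPolynomial.X : ℕ → ARing)) = n := by
    simp
  rw [hcard] at key
  have h2 := congrArg (Polynomial.aeval (MvPolynomial.X j (R := ARing))) key
  rw [map_multiset_prod, map_sum] at h2
  convert h2 using 1
  · rw [Multiset.map_map, Finset.prod]
    congr 1
    rw [Multiset.map_map]
    apply Multiset.map_congr rfl
    intro t _
    simp [MvPolynomial.algebraMap_eq]
  · apply Finset.sum_congr rfl
    intro k _
    rw [map_mul, map_pow, Polynomial.aeval_X, Polynomial.aeval_C,
      Finset.esymm_map_val, MvPolynomial.algebraMap_eq]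
    rfl

lemma factor_expand {r : ℕ} (j : Fin r) (c : ℕ) (hc : 1 ≤ c) :
    ∏ t ∈ Finset.range c, (MvPolynomial.X j + MvPolynomial.C (aval t)) =
      ∑ m ∈ Finset.Icc 1 c,
        MvPolynomial.C (esymA (c - m) (c - 1)) * MvPolynomial.X j ^ m := by
  obtain ⟨n, rfl⟩ : ∃ n, c = n + 1 := ⟨c - 1, (Nat.succ_pred_eq_of_pos hc).symm⟩
  rw [Finset.prod_range_succ']
  have h0 : MvPolynomial.X j + MvPolynomial.C (aval 0) = MvPolynomial.X (R := ARing) j := by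
    simp [aval]
  have h1 : ∀ t, aval (t + 1) = MvPolynomial.X t := fun t => by simp [aval]
  simp only [h1, h0]
  rw [vieta_core j n, Finset.sum_mul]
  apply Finset.sum_nbij' (fun k => n + 1 - k) (fun m => n + 1 - m)
  · intro k hk
    rw [Finset.mem_range] at hk
    rw [Finset.mem_Icc]
    omega
  · intro m hm
    rw [Finset.mem_Icc] at hm
    rw [Finset.mem_range]
    omega
  · intro k hk; rw [Finset.mem_range] at hk; omega
  · intro m hm; rw [Finset.mem_Icc] at hm; omega
  · intro k hk
    rw [Finset.mem_range] at hk
    have e1 : n + 1 - (n + 1 - k) = k := by omega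
    have e2 : n + 1 - 1 = n := by omega
    have e3 : n + 1 - k = n - k + 1 := by omega
    rw [e1, e2, e3, pow_succ, mul_assoc]

lemma term_expand {r : ℕ} (c : Fin r → ℕ) (hc : ∀ i, 1 ≤ c i) (e : Fin r → Fin r) :
    ∏ i, ∏ t ∈ Finset.range (c i), (MvPolynomial.X (e i) + MvPolynomial.C (aval t)) =
      ∑ α ∈ Fintype.piFinset (fun i => Finset.Icc 1 (c i)),
        MvPolynomial.C (∏ i, esymA (c i - α i) (c i - 1)) *
          ∏ i, MvPolynomial.X (e i) ^ α i := by
  have h : ∀ i : Fin r,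
      ∏ t ∈ Finset.range (c i), (MvPolynomial.X (e i) + MvPolynomial.C (aval t)) =
        ∑ m ∈ Finset.Icc 1 (c i),
          MvPolynomial.C (esymA (c i - m) (c i - 1)) * MvPolynomial.X (e i) ^ m :=
    fun i => factor_expand (e i) (c i) (hc i)
  rw [Finset.prod_congr rfl fun i _ => h i, Finset.prod_univ_sum]
  apply Finset.sum_congr rfl
  intro α _
  rw [Finset.prod_mul_distrib, ← map_prod]

/-! ### Injectivity of the basic products -/

lemma mono_eq_monomial {r : ℕ} (β : Fin r → ℕ) :
    (∏ i, MvPolynomial.X i ^ β i : MvPolynomial (Fin r) ARing) =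
      MvPolynomial.monomial (Finsupp.equivFunOnFinite.symm β) 1 := by
  rw [← MvPolynomial.prod_X_pow_eq_monomial]
  apply (Finset.prod_subset (Finset.subset_univ _) _).symm
  intro i _ hi
  have h : Finsupp.equivFunOnFinite.symm β i = 0 := by
    simpa [Finsupp.mem_support_iff] using hi
  simp only [Finsupp.equivFunOnFinite_symm_apply_apply] at h ⊢
  rw [h, pow_zero]

lemma coeff_expand {r : ℕ} (c : Fin r → ℕ) (P : Finset (Fin r → ℕ))
    (g : (Fin r → ℕ) → ARing) :
    MvPolynomial.coeff (Finsupp.equivFunOnFinite.symm c)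
      (∑ α ∈ P, MvPolynomial.C (g α) * ∏ i, MvPolynomial.X i ^ α i) =
      if c ∈ P then g c else 0 := by
  rw [MvPolynomial.coeff_sum]
  have h : ∀ α ∈ P, MvPolynomial.coeff (Finsupp.equivFunOnFinite.symm c)
      (MvPolynomial.C (g α) * ∏ i, MvPolynomial.X i ^ α i) =
      if α = c then g α else 0 := by
    intro α _
    rw [mono_eq_monomial, MvPolynomial.C_mul_monomial, mul_one,
      MvPolynomial.coeff_monomial]
    congr 1
    simp only [eq_iff_iff]
    constructor
    · intro h; exact Finsupp.equivFunOnFinite.symm.injective h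
    · intro h; rw [h]
  rw [Finset.sum_congr rfl h, Finset.sum_ite_eq' P c g]

/-- The basic product `∏_i (ξ_i + a_0)⋯(ξ_i + a_{c_i-1})`. -/
noncomputable def Tfun {r : ℕ} (c : Fin r → ℕ) : MvPolynomial (Fin r) ARing :=
  ∏ i, ∏ t ∈ Finset.range (c i), (MvPolynomial.X i + MvPolynomial.C (aval t))

lemma T_inj {r : ℕ} {c c' : Fin r → ℕ} (hc : ∀ i, 1 ≤ c i) (hc' : ∀ i, 1 ≤ c' i)
    (hsum : ∑ i, c i = ∑ i, c' i) (h : Tfun c = Tfun c') : c = c' := by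
  have e1 : MvPolynomial.coeff (Finsupp.equivFunOnFinite.symm c) (Tfun c) = 1 := by
    rw [Tfun, term_expand c hc (fun i => i), coeff_expand]
    rw [if_pos (by
      rw [Fintype.mem_piFinset]
      intro i
      rw [Finset.mem_Icc]
      exact ⟨hc i, le_refl _⟩)]
    simp [esymA_self_zero]
  have e2 : MvPolynomial.coeff (Finsupp.equivFunOnFinite.symm c) (Tfun c') = 1 := by
    rw [← h, e1]
  rw [Tfun, term_expand c' hc' (fun i => i), coeff_expand] at e2
  by_cases hmem : c ∈ Fintype.piFinset (fun i => Finset.Icc 1 (c' i))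
  · rw [Fintype.mem_piFinset] at hmem
    have hle : ∀ i : Fin r, i ∈ Finset.univ → c i ≤ c' i := by
      intro i _
      exact (Finset.mem_Icc.mp (hmem i)).2
    funext i
    exact (Finset.sum_eq_sum_iff_of_le hle).mp hsum i (Finset.mem_univ i)
  · rw [if_neg hmem] at e2
    exact absurd e2.symm one_ne_zero

/-! ### Integer coefficients -/

/-- Integral version of the coefficient `e_{c-m}(a_1,…,a_{c-1})` (or `0` out of range). -/
noncomputable def hcoefZ (c m : ℕ) : MvPolynomial ℕ ℤ :=
  if 1 ≤ m ∧ m ≤ c then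
    ∑ s ∈ Finset.powersetCard (c - m) (Finset.range (c - 1)), ∏ t ∈ s, MvPolynomial.X t
  else 0

/-- The coefficient `e_{c-m}(a_1,…,a_{c-1})` (or `0` out of range). -/
noncomputable def hcoef (c m : ℕ) : ARing :=
  if 1 ≤ m ∧ m ≤ c then esymA (c - m) (c - 1) else 0

lemma map_hcoefZ (c m : ℕ) :
    MvPolynomial.map (Int.castRingHom ℚ) (hcoefZ c m) = hcoef c m := by
  unfold hcoefZ hcoef esymA
  split
  · rw [map_sum]
    apply Finset.sum_congr rfl
    intro s _
    rw [map_prod]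
    apply Finset.prod_congr rfl
    intro t _
    rw [MvPolynomial.map_X]
  · rw [map_zero]


lemma nfac_div {r : ℕ} (f g : Fin r → ℕ) :
    nfac f / nfac g = (Mfac g : ℚ) / (Mfac f : ℚ) := by
  have h1 : (Mfac f : ℚ) ≠ 0 := Nat.cast_ne_zero.mpr (Mfac_pos f).ne'
  have h2 : (Mfac g : ℚ) ≠ 0 := Nat.cast_ne_zero.mpr (Mfac_pos g).ne'
  have h3 : (r.factorial : ℚ) ≠ 0 := Nat.cast_ne_zero.mpr r.factorial_pos.ne'
  rw [nfac_eq, nfac_eq]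
  field_simp

lemma prod_hcoef {r : ℕ} (l β : Fin r → ℕ) :
    ∏ i, hcoef (l i) (β i) =
      if β ∈ Fintype.piFinset (fun i => Finset.Icc 1 (l i)) then
        ∏ i, esymA (l i - β i) (l i - 1)
      else 0 := by
  split
  · rename_i hmem
    rw [Fintype.mem_piFinset] at hmem
    apply Finset.prod_congr rfl
    intro i _
    have := Finset.mem_Icc.mp (hmem i)
    rw [hcoef, if_pos this]
  · rename_i hmem
    rw [Fintype.mem_piFinset] at hmem
    push_neg at hmem
    obtain ⟨i0, hi0⟩ := hmem
    apply Finset.prod_eq_zero (Finset.mem_univ i0)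
    rw [hcoef, if_neg]
    rw [Finset.mem_Icc] at hi0
    exact hi0

/-- Step 1 of part 1: `Mfac l • dmsym l` is the full sum over permutations. -/
lemma dmsym_full_sum {r : ℕ} (l : Fin r → ℕ) (hpos : ∀ i, 0 < l i) :
    (Mfac l) • dmsym l =
      ∑ σ : Equiv.Perm (Fin r),
        ∏ i, ∏ t ∈ Finset.range (l i),
          (MvPolynomial.X (σ i) + MvPolynomial.C (aval t)) := by
  classical
  set term : Equiv.Perm (Fin r) → MvPolynomial (Fin r) ARing :=
    fun σ => ∏ i, ∏ t ∈ Finset.range (l i),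
      (MvPolynomial.X (σ i) + MvPolynomial.C (aval t)) with hterm_def
  have hterm : ∀ σ : Equiv.Perm (Fin r), term σ = Tfun (l ∘ ⇑σ⁻¹) := by
    intro σ
    rw [Tfun, ← Equiv.prod_comp σ
      (fun j => ∏ t ∈ Finset.range ((l ∘ ⇑σ⁻¹) j),
        (MvPolynomial.X j + MvPolynomial.C (aval t)))]
    apply Finset.prod_congr rfl
    intro i _
    simp only [Function.comp_apply, Equiv.Perm.inv_def, Equiv.symm_apply_apply]
  rw [show (∑ σ : Equiv.Perm (Fin r), term σ) = ∑ σ : Equiv.Perm (Fin r), id (term σ) from rfl,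
    Finset.sum_comp id term]
  rw [dmsym]
  rw [Finset.smul_sum]
  apply Finset.sum_congr rfl
  intro p hp
  obtain ⟨σ₀, _, hσ₀⟩ := Finset.mem_image.mp hp
  have hsum : ∀ σ : Equiv.Perm (Fin r), ∑ j, l (σ⁻¹ j) = ∑ j, l j := by
    intro σ
    exact Equiv.sum_comp σ⁻¹ l
  have hfil : (Finset.univ.filter fun σ => term σ = p) =
      (Finset.univ.filter fun σ : Equiv.Perm (Fin r) => l ∘ ⇑σ⁻¹ = l ∘ ⇑σ₀⁻¹) := by
    apply Finset.filter_congr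
    intro σ _
    constructor
    · intro h
      apply T_inj (fun j => hpos _) (fun j => hpos _)
      · rw [hsum σ, hsum σ₀]
      · show Tfun (l ∘ ⇑σ⁻¹) = Tfun (l ∘ ⇑σ₀⁻¹)
        rw [← hterm σ, ← hterm σ₀, h]
        exact hσ₀.symm
    · intro h
      rw [hterm σ, h, ← hterm σ₀]
      exact hσ₀
  rw [hfil]
  have hcard : (Finset.univ.filter
      fun σ : Equiv.Perm (Fin r) => l ∘ ⇑σ⁻¹ = l ∘ ⇑σ₀⁻¹).card = Mfac l := by
    rw [← card_fiber l (l ∘ ⇑σ₀⁻¹) σ₀⁻¹ rfl]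
    apply Finset.card_bij' (fun σ _ => σ⁻¹) (fun τ _ => τ⁻¹) <;>
      intro x hx <;>
      simp only [Finset.mem_filter, Finset.mem_univ, true_and, inv_inv] at hx ⊢ <;>
      first | exact hx | rfl
  rw [hcard]

/-- Step 2 of part 1. -/
lemma full_sum_expand {r : ℕ} (l : Fin r → ℕ) (hpos : ∀ i, 0 < l i) :
    (∑ σ : Equiv.Perm (Fin r),
        ∏ i, ∏ t ∈ Finset.range (l i),
          (MvPolynomial.X (σ i) + MvPolynomial.C (aval t))) =
      ∑ α ∈ Fintype.piFinset (fun i => Finset.Icc 1 (l i)),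
        MvPolynomial.C (∏ i, esymA (l i - α i) (l i - 1)) * ((Mfac α) • msym α) := by
  classical
  have hexp : ∀ σ : Equiv.Perm (Fin r),
      ∏ i, ∏ t ∈ Finset.range (l i),
        (MvPolynomial.X (σ i) + MvPolynomial.C (aval t)) =
      ∑ α ∈ Fintype.piFinset (fun i => Finset.Icc 1 (l i)),
        MvPolynomial.C (∏ i, esymA (l i - α i) (l i - 1)) *
          ∏ i, MvPolynomial.X (σ i) ^ α i :=
    fun σ => term_expand l (fun i => hpos i) ⇑σ
  rw [Finset.sum_congr rfl fun σ _ => hexp σ, Finset.sum_comm]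
  apply Finset.sum_congr rfl
  intro α _
  rw [← Finset.mul_sum]
  congr 1
  have h1 : ∀ σ : Equiv.Perm (Fin r),
      (∏ i, MvPolynomial.X (σ i) ^ α i : MvPolynomial (Fin r) ARing) =
        ∏ i, MvPolynomial.X i ^ (α ∘ ⇑σ⁻¹) i := by
    intro σ
    rw [← Equiv.prod_comp σ (fun j => MvPolynomial.X j ^ (α ∘ ⇑σ⁻¹) j)]
    apply Finset.prod_congr rfl
    intro i _
    simp only [Function.comp_apply, Equiv.Perm.inv_def, Equiv.symm_apply_apply]
  rw [Finset.sum_congr rfl fun σ _ => h1 σ]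
  have h2 : (∑ σ : Equiv.Perm (Fin r), ∏ i, MvPolynomial.X i ^ (α ∘ ⇑σ⁻¹) i :
      MvPolynomial (Fin r) ARing) =
      ∑ σ : Equiv.Perm (Fin r), ∏ i, MvPolynomial.X i ^ (α ∘ ⇑σ) i := by
    exact Equiv.sum_comp (Equiv.inv (Equiv.Perm (Fin r)))
      (fun σ => ∏ i, MvPolynomial.X i ^ (α ∘ ⇑σ) i)
  rw [h2, sum_perm_comp α (fun β => ∏ i, MvPolynomial.X i ^ β i), ← Finset.smul_sum, msym]

/-- The expansion `m_λ(ξ|a) = Σ_{(1^r) ⊆ α ⊆ λ} (n_λ/n_α) e_{λ/α}(a) m_α(ξ)`, where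
`e_{λ/α}(a) = ∏_i e_{λ_i − α_i}(a_1, …, a_{λ_i − 1})`; moreover, after collecting terms
over the rearrangement class of each `α`, the resulting coefficient is a polynomial with
integer coefficients. -/
theorem double_monomial_expansion {r : ℕ} (l : Fin r → ℕ)
    (hpos : ∀ i, 0 < l i) (hdec : ∀ i j : Fin r, i ≤ j → l j ≤ l i) :
    (dmsym l =
      ∑ α ∈ Fintype.piFinset (fun i => Finset.Icc 1 (l i)),
        (nfac l / nfac α) •
          (MvPolynomial.C (∏ i, esymA (l i - α i) (l i - 1)) * msym α)) ∧
    (∀ μ : Fin r → ℕ,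
      (∑ α ∈ (Fintype.piFinset (fun i => Finset.Icc 1 (l i))).filter
          (fun α => Finset.univ.val.map α = Finset.univ.val.map μ),
        (nfac l / nfac α) • ∏ i, esymA (l i - α i) (l i - 1))
        ∈ Set.range (MvPolynomial.map (Int.castRingHom ℚ) : MvPolynomial ℕ ℤ →+* ARing)) := by
  classical
  have hMl : (Mfac l : ℚ) ≠ 0 := Nat.cast_ne_zero.mpr (Mfac_pos l).ne'
  constructor
  · -- Part 1
    set RHS := ∑ α ∈ Fintype.piFinset (fun i => Finset.Icc 1 (l i)),
        (nfac l / nfac α) •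
          (MvPolynomial.C (∏ i, esymA (l i - α i) (l i - 1)) * msym α) with hRHS
    have key : (Mfac l : ℚ) • dmsym l = (Mfac l : ℚ) • RHS := by
      rw [Nat.cast_smul_eq_nsmul, dmsym_full_sum l hpos, full_sum_expand l hpos,
        hRHS, Finset.smul_sum]
      apply Finset.sum_congr rfl
      intro α _
      rw [smul_smul, nfac_div, mul_div_cancel₀ _ hMl, mul_smul_comm,
        Nat.cast_smul_eq_nsmul]
    calc dmsym l = (Mfac l : ℚ)⁻¹ • ((Mfac l : ℚ) • dmsym l) := (inv_smul_smul₀ hMl _).symm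
      _ = (Mfac l : ℚ)⁻¹ • ((Mfac l : ℚ) • RHS) := by rw [key]
      _ = RHS := inv_smul_smul₀ hMl _
  · -- Part 2
    intro μ
    set P := Fintype.piFinset (fun i => Finset.Icc 1 (l i)) with hP
    set FS := P.filter (fun α => Finset.univ.val.map α = Finset.univ.val.map μ) with hFS
    set F : (Fin r → ℕ) → ARing := fun α => ∏ i, esymA (l i - α i) (l i - 1) with hF
    set W : ARing := ∑ c ∈ Finset.image (fun σ : Equiv.Perm (Fin r) => l ∘ ⇑σ) Finset.univ,
      ∏ i, hcoef (c i) (μ i) with hW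
    have hMμ : (Mfac μ : ℚ) ≠ 0 := Nat.cast_ne_zero.mpr (Mfac_pos μ).ne'
    -- the target sum equals W
    have hSW : (∑ α ∈ FS, (nfac l / nfac α) • F α) = W := by
      have hnf : ∀ α ∈ FS, nfac α = nfac μ := by
        intro α hα
        obtain ⟨_, h⟩ := Finset.mem_filter.mp hα
        rw [nfac_eq, nfac_eq, Mfac_congr h]
      have hS1 : (∑ α ∈ FS, (nfac l / nfac α) • F α) =
          (nfac l / nfac μ) • ∑ α ∈ FS, F α := by
        rw [Finset.smul_sum]
        exact Finset.sum_congr rfl fun α hα => by rw [hnf α hα]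
      -- key double counting
      have hA1 : (∑ σ : Equiv.Perm (Fin r), ∏ i, hcoef (l i) (μ (σ i))) =
          (Mfac μ) • ∑ α ∈ FS, F α := by
        rw [show (∑ σ : Equiv.Perm (Fin r), ∏ i, hcoef (l i) (μ (σ i))) =
            ∑ σ : Equiv.Perm (Fin r), (fun β => ∏ i, hcoef (l i) (β i)) (μ ∘ ⇑σ) from rfl,
          sum_perm_comp μ (fun β => ∏ i, hcoef (l i) (β i)), ← Finset.smul_sum]
        congr 1
        rw [Finset.sum_congr rfl fun β _ => prod_hcoef l β, Finset.sum_ite, Finset.sum_const_zero,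
          add_zero]
        apply Finset.sum_congr _ fun β _ => rfl
        ext β
        simp only [Finset.mem_filter, Finset.mem_image, Finset.mem_univ, true_and, hFS, hP]
        rw [and_comm]
        constructor
        · rintro ⟨hβP, σ, hσ⟩
          exact ⟨hβP, (exists_perm_iff μ β).mp ⟨σ, hσ⟩⟩
        · rintro ⟨hβP, h⟩
          obtain ⟨σ, hσ⟩ := (exists_perm_iff μ β).mpr h
          exact ⟨hβP, σ, hσ⟩
      have hA2 : (∑ σ : Equiv.Perm (Fin r), ∏ i, hcoef (l i) (μ (σ i))) =
          (Mfac l) • W := by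
        have hre : ∀ σ : Equiv.Perm (Fin r),
            (∏ i, hcoef (l i) (μ (σ i))) = ∏ i, hcoef ((l ∘ ⇑σ⁻¹) i) (μ i) := by
          intro σ
          rw [← Equiv.prod_comp σ (fun j => hcoef ((l ∘ ⇑σ⁻¹) j) (μ j))]
          apply Finset.prod_congr rfl
          intro i _
          simp only [Function.comp_apply, Equiv.Perm.inv_def, Equiv.symm_apply_apply]
        rw [Finset.sum_congr rfl fun σ _ => hre σ]
        have hinv : (∑ σ : Equiv.Perm (Fin r), ∏ i, hcoef ((l ∘ ⇑σ⁻¹) i) (μ i)) =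
            ∑ σ : Equiv.Perm (Fin r), ∏ i, hcoef ((l ∘ ⇑σ) i) (μ i) :=
          Equiv.sum_comp (Equiv.inv (Equiv.Perm (Fin r)))
            (fun σ => ∏ i, hcoef ((l ∘ ⇑σ) i) (μ i))
        rw [hinv]
        rw [show (∑ σ : Equiv.Perm (Fin r), ∏ i, hcoef ((l ∘ ⇑σ) i) (μ i)) =
            ∑ σ : Equiv.Perm (Fin r), (fun c => ∏ i, hcoef (c i) (μ i)) (l ∘ ⇑σ) from rfl,
          sum_perm_comp l (fun c => ∏ i, hcoef (c i) (μ i)), ← Finset.smul_sum, hW]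
      have hkey : (Mfac μ : ℚ) • (∑ α ∈ FS, F α) = (Mfac l : ℚ) • W := by
        rw [Nat.cast_smul_eq_nsmul, Nat.cast_smul_eq_nsmul, ← hA1, hA2]
      rw [hS1, nfac_div, div_eq_inv_mul, mul_smul, hkey, inv_smul_smul₀ hMl]
    rw [hSW]
    refine ⟨∑ c ∈ Finset.image (fun σ : Equiv.Perm (Fin r) => l ∘ ⇑σ) Finset.univ,
      ∏ i, hcoefZ (c i) (μ i), ?_⟩
    rw [map_sum, hW]
    apply Finset.sum_congr rfl
    intro c _
    rw [map_prod]
    exact Finset.prod_congr rfl fun i _ => map_hcoefZ (c i) (μ i)
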